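/- Let m ≥ 2 and let Γ^{(m)} be the graph on 𝔽₂^m × 𝔽₂^m with (v₁,v₂) ~ (w₁,w₂) iff (v₁+w₁)ᵀ(v₂+w₂) = 0 and v₂ ≠ w₂. Then every affine transformation x ↦ Mx + c, where M = [[A, AS],[0,(Aᵀ)⁻¹]] with A ∈ GL(m,2) and S symmetric with zero diagonal, and c ∈ 𝔽₂^{2m}, is an automorphism of Γ^{(m)}. -/
import Mathlib


open Matrix

/-- Adjacency in the Brouwer–Ivanov–Klin graph `Γ^{(m)}`. -/
def Adj (m : ℕ) (v w : (Fin m → ZMod 2) × (Fin m → ZMod 2)) : Prop :=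
  (v.1 + w.1) ⬝ᵥ (v.2 + w.2) = 0 ∧ v.2 ≠ w.2

private lemma two_zero : (2 : ZMod 2) = 0 := rfl

private lemma mulVec_inj {m : ℕ} (B : Matrix (Fin m) (Fin m) (ZMod 2)) (hB : IsUnit B) :
    Function.Injective B.mulVec := by
  intro x y h
  have hd : IsUnit B.det := (Matrix.isUnit_iff_isUnit_det B).mp hB
  have := congrArg (B⁻¹.mulVec) h
  simpa [Matrix.mulVec_mulVec, Matrix.nonsing_inv_mul B hd] using this

private lemma quad_zero {m : ℕ} (S : Matrix (Fin m) (Fin m) (ZMod 2))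
    (hS : S.IsSymm) (hS0 : ∀ i, S i i = 0) (y : Fin m → ZMod 2) :
    (S.mulVec y) ⬝ᵥ y = 0 := by
  have hthis : (S.mulVec y) ⬝ᵥ y = ∑ p ∈ Finset.univ ×ˢ Finset.univ,
      S p.1 p.2 * y p.2 * y p.1 := by
    rw [Finset.sum_product]
    simp only [dotProduct, Matrix.mulVec, Finset.sum_mul]
  rw [hthis]
  refine Finset.sum_involution (fun p _ => p.swap) ?_ ?_ (fun _ _ => Finset.mem_univ _)
    (fun p _ => Prod.swap_swap p)
  · intro p _
    have hsym : S p.2 p.1 = S p.1 p.2 := by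
      conv_lhs => rw [← hS]
      rfl
    simp only [Prod.fst_swap, Prod.snd_swap, hsym]
    ring_nf
    simp [two_zero]
  · intro p _ hne hswap
    apply hne
    have h12 : p.2 = p.1 := congrArg Prod.fst hswap
    rw [h12, hS0]
    ring

private lemma mulVec_dot {m : ℕ} (B : Matrix (Fin m) (Fin m) (ZMod 2))
    (x z : Fin m → ZMod 2) : (B.mulVec x) ⬝ᵥ z = x ⬝ᵥ (Bᵀ.mulVec z) := by
  rw [dotProduct_comm, Matrix.dotProduct_mulVec, dotProduct_comm]
  congr 1
  rw [← Matrix.vecMul_transpose, Matrix.transpose_transpose]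

theorem stmt11 (m : ℕ) (hm : 2 ≤ m) (A S : Matrix (Fin m) (Fin m) (ZMod 2))
    (hA : IsUnit A) (hS : S.IsSymm) (hS0 : ∀ i, S i i = 0)
    (c : (Fin m → ZMod 2) × (Fin m → ZMod 2)) :
    Function.Bijective (fun v : (Fin m → ZMod 2) × (Fin m → ZMod 2) =>
        (A.mulVec v.1 + (A * S).mulVec v.2 + c.1, Aᵀ⁻¹.mulVec v.2 + c.2)) ∧
    (∀ u w, Adj m ((A.mulVec u.1 + (A * S).mulVec u.2 + c.1, Aᵀ⁻¹.mulVec u.2 + c.2))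
                 ((A.mulVec w.1 + (A * S).mulVec w.2 + c.1, Aᵀ⁻¹.mulVec w.2 + c.2))
        ↔ Adj m u w) := by
  have hAd : IsUnit A.det := (Matrix.isUnit_iff_isUnit_det A).mp hA
  have hAtd : IsUnit Aᵀ.det := by rw [Matrix.det_transpose]; exact hAd
  have hAt : IsUnit Aᵀ := (Matrix.isUnit_iff_isUnit_det Aᵀ).mpr hAtd
  have hAti : IsUnit Aᵀ⁻¹ := Matrix.isUnit_nonsing_inv_iff.mpr hAt
  have hAtm : Aᵀ * Aᵀ⁻¹ = 1 := Matrix.mul_nonsing_inv Aᵀ hAtd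
  have h2inj : Function.Injective (Aᵀ⁻¹).mulVec := mulVec_inj _ hAti
  have h1inj : Function.Injective A.mulVec := mulVec_inj _ hA
  constructor
  · rw [Fintype.bijective_iff_injective_and_card]
    refine ⟨?_, rfl⟩
    intro u w h
    have h2 : Aᵀ⁻¹.mulVec u.2 + c.2 = Aᵀ⁻¹.mulVec w.2 + c.2 := congrArg Prod.snd h
    have hu2 : u.2 = w.2 := h2inj (by simpa using h2)
    have h1 : A.mulVec u.1 + (A * S).mulVec u.2 + c.1
        = A.mulVec w.1 + (A * S).mulVec w.2 + c.1 := congrArg Prod.fst h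
    rw [hu2] at h1
    have hu1 : u.1 = w.1 := h1inj (by
      have := add_right_cancel h1
      exact add_right_cancel this)
    exact Prod.ext hu1 hu2
  · intro u w
    unfold Adj
    have key : ∀ x y : Fin m → ZMod 2,
        (A.mulVec x + (A * S).mulVec y) ⬝ᵥ (Aᵀ⁻¹.mulVec y) = x ⬝ᵥ y := by
      intro x y
      calc (A.mulVec x + (A * S).mulVec y) ⬝ᵥ (Aᵀ⁻¹.mulVec y)
          = x ⬝ᵥ (Aᵀ.mulVec (Aᵀ⁻¹.mulVec y))
            + (S.mulVec y) ⬝ᵥ (Aᵀ.mulVec (Aᵀ⁻¹.mulVec y)) := by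
            rw [add_dotProduct, mulVec_dot, ← Matrix.mulVec_mulVec, mulVec_dot]
        _ = x ⬝ᵥ y + (S.mulVec y) ⬝ᵥ y := by
            rw [Matrix.mulVec_mulVec, hAtm, Matrix.one_mulVec]
        _ = x ⬝ᵥ y := by rw [quad_zero S hS hS0 y, add_zero]
    have hsumeq : (A.mulVec u.1 + (A * S).mulVec u.2 + c.1)
          + (A.mulVec w.1 + (A * S).mulVec w.2 + c.1)
        = A.mulVec (u.1 + w.1) + (A * S).mulVec (u.2 + w.2) := by
      rw [Matrix.mulVec_add, Matrix.mulVec_add]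
      funext i
      simp only [Pi.add_apply]
      ring_nf
      simp only [two_zero, mul_zero, add_zero, zero_add]
    have hsumeq2 : (Aᵀ⁻¹.mulVec u.2 + c.2) + (Aᵀ⁻¹.mulVec w.2 + c.2)
        = Aᵀ⁻¹.mulVec (u.2 + w.2) := by
      rw [Matrix.mulVec_add]
      funext i
      simp only [Pi.add_apply]
      ring_nf
      simp only [two_zero, mul_zero, add_zero, zero_add]
    constructor
    · rintro ⟨hd, hne⟩
      refine ⟨?_, ?_⟩
      · rw [hsumeq, hsumeq2, key] at hd
        exact hd
      · intro he; exact hne (by rw [he])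
    · rintro ⟨hd, hne⟩
      refine ⟨?_, ?_⟩
      · rw [hsumeq, hsumeq2, key]
        exact hd
      · intro he
        exact hne (h2inj (by simpa using he))
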